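/- [Claim 2 in the proof of Lemma 1, via LP duality] Let (λ_s, π_s)_{s∈S} be an optimal splitting of the prior π° ∈ Δ(Ω), let B ⊆ A be nonempty and let ε > 0. If for every α ∈ Δ(B) there exists s ∈ S with u(α, π_s) − ū(π_s) ≥ ε, then there exists μ ∈ Δ(S) such that u(α, Σ_{s∈S} μ_s π_s) ≥ Σ_{s∈S} μ_s ū(π_s) + ε for every α ∈ Δ(B). (Here Δ(B) is identified with the mixed actions in Δ(A) supported on B.) -/

import Mathlib

open Finset

variable {Ω A : Type*}

/-- Expected payoff of mixed action `α` at belief `π` (bilinear extension of `u`). -/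
noncomputable def pay [Fintype Ω] [Fintype A] (u : A → Ω → ℝ) (α : A → ℝ) (π : Ω → ℝ) : ℝ :=
  ∑ a, ∑ ω, α a * π ω * u a ω

/-- Expected payoff of pure action `a` at belief `π`. -/
noncomputable def payP [Fintype Ω] (u : A → Ω → ℝ) (a : A) (π : Ω → ℝ) : ℝ :=
  ∑ ω, π ω * u a ω

/-- Pure best replies of the decision-maker at belief `π`. -/
def br [Fintype Ω] (v : A → Ω → ℝ) (π : Ω → ℝ) : Set A :=
  {a | ∀ a', payP v a' π ≤ payP v a π}

/-- Mixed best replies of the decision-maker at belief `π`. -/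
def BR [Fintype Ω] [Fintype A] (v : A → Ω → ℝ) (π : Ω → ℝ) : Set (A → ℝ) :=
  {α ∈ stdSimplex ℝ A | ∀ α' ∈ stdSimplex ℝ A, pay v α' π ≤ pay v α π}

/-- The expert value function `ū(π) = max_{α ∈ BR(π)} u(α, π)`. -/
noncomputable def ubar [Fintype Ω] [Fintype A] (u v : A → Ω → ℝ) (π : Ω → ℝ) : ℝ :=
  sSup ((fun α => pay u α π) '' BR v π)

/-- The decision-maker value function `v̄(π) = max_a v(a, π)`. -/
noncomputable def vbar [Fintype Ω] [Fintype A] (v : A → Ω → ℝ) (π : Ω → ℝ) : ℝ :=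
  ⨆ a, payP v a π

/-- Actions that are a best reply to some belief. -/
def Ahat [Fintype Ω] [Fintype A] (v : A → Ω → ℝ) : Set A :=
  {a | ∃ π ∈ stdSimplex ℝ Ω, a ∈ br v π}

/-- Mixed actions supported on `B`. -/
def simplexOn [Fintype A] (B : Set A) : Set (A → ℝ) :=
  {α | α ∈ stdSimplex ℝ A ∧ ∀ a ∉ B, α a = 0}

/-- `(lam, p)` is a splitting of the prior. -/
def IsSplitting [Fintype Ω] {S : Type*} [Fintype S] (lam : S → ℝ) (p : S → Ω → ℝ)
    (prior : Ω → ℝ) : Prop :=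
  (∀ s, 0 < lam s) ∧ (∑ s, lam s) = 1 ∧ (∀ s, p s ∈ stdSimplex ℝ Ω) ∧
    ∀ ω, (∑ s, lam s * p s ω) = prior ω

/-- `(lam, p)` is an optimal splitting of the prior: it attains `cav ū (prior)`. -/
def IsOptimalSplitting [Fintype Ω] [Fintype A] (u v : A → Ω → ℝ) {S : Type*} [Fintype S]
    (lam : S → ℝ) (p : S → Ω → ℝ) (prior : Ω → ℝ) : Prop :=
  IsSplitting lam p prior ∧
    ∀ (T : Type) [Fintype T] [Nonempty T] (mu : T → ℝ) (q : T → Ω → ℝ),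
      IsSplitting mu q prior →
        (∑ t, mu t * ubar u v (q t)) ≤ ∑ s, lam s * ubar u v (p s)

lemma pay_eq_sum {Ω A : Type*} [Fintype Ω] [Fintype A] (u : A → Ω → ℝ) (α : A → ℝ) (π : Ω → ℝ) :
    pay u α π = ∑ a, α a * payP u a π := by
  simp [pay, payP, Finset.mul_sum, mul_assoc]

lemma pay_smul_add {Ω A : Type*} [Fintype Ω] [Fintype A] (u : A → Ω → ℝ) (α β : A → ℝ)
    (π : Ω → ℝ) (a b : ℝ) :
    pay u (a • α + b • β) π = a * pay u α π + b * pay u β π := by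
  simp [pay_eq_sum, Finset.mul_sum, ← Finset.sum_add_distrib]
  apply Finset.sum_congr rfl
  intros; ring

lemma payP_sum {Ω A S : Type*} [Fintype Ω] [Fintype S] (u : A → Ω → ℝ) (a : A)
    (μ : S → ℝ) (p : S → Ω → ℝ) :
    payP u a (fun ω => ∑ s, μ s * p s ω) = ∑ s, μ s * payP u a (p s) := by
  simp only [payP, Finset.sum_mul, Finset.mul_sum]
  rw [Finset.sum_comm]
  apply Finset.sum_congr rfl
  intros; apply Finset.sum_congr rfl; intros; ring

lemma pay_sum {Ω A S : Type*} [Fintype Ω] [Fintype A] [Fintype S] (u : A → Ω → ℝ) (α : A → ℝ)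
    (μ : S → ℝ) (p : S → Ω → ℝ) :
    pay u α (fun ω => ∑ s, μ s * p s ω) = ∑ s, μ s * pay u α (p s) := by
  simp only [pay_eq_sum, payP_sum, Finset.mul_sum]
  rw [Finset.sum_comm]
  apply Finset.sum_congr rfl
  intros; apply Finset.sum_congr rfl; intros; ring


/-- Claim 2 in the proof of Lemma 1, via LP duality. -/
theorem claim2 {Ω A S : Type*} [Fintype Ω] [Nonempty Ω] [Fintype A] [Nonempty A]
    [Fintype S] [Nonempty S] (u v : A → Ω → ℝ) (prior : Ω → ℝ) (hprior : prior ∈ stdSimplex ℝ Ω)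
    (lam : S → ℝ) (p : S → Ω → ℝ) (hopt : IsOptimalSplitting u v lam p prior)
    (B : Set A) (hB : B.Nonempty) (ε : ℝ) (hε : 0 < ε)
    (hyp : ∀ α ∈ simplexOn B, ∃ s, ε ≤ pay u α (p s) - ubar u v (p s)) :
    ∃ μ ∈ stdSimplex ℝ S, ∀ α ∈ simplexOn B,
      (∑ s, μ s * ubar u v (p s)) + ε ≤ pay u α (fun ω => ∑ s, μ s * p s ω) := by
  classical
  set g : (A → ℝ) → S → ℝ := fun α s => pay u α (p s) - ubar u v (p s) with hg
  set C : Set (S → ℝ) := g '' simplexOn B with hC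
  set O : Set (S → ℝ) := {x | ∀ s, x s < ε} with hO
  -- O is open
  have hOopen : IsOpen O := by
    have : O = ⋂ s, {x : S → ℝ | x s < ε} := by
      ext x; simp [hO, Set.mem_iInter]
    rw [this]
    exact isOpen_iInter_of_finite fun s =>
      isOpen_lt (continuous_apply s) continuous_const
  -- O is convex
  have hOconv : Convex ℝ O := by
    intro x hx y hy a b ha hb hab
    intro s
    calc a * x s + b * y s < a * ε + b * ε := by
          rcases eq_or_lt_of_le ha with h | h
          · rcases eq_or_lt_of_le hb with h' | h'
            · exfalso; rw [← h, ← h'] at hab; simpa using hab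
            · simp only [← h]; simpa using mul_lt_mul_of_pos_left (hy s) h'
          · rcases eq_or_lt_of_le hb with h' | h'
            · simp only [← h']; simpa using mul_lt_mul_of_pos_left (hx s) h
            · exact add_lt_add (mul_lt_mul_of_pos_left (hx s) h)
                (mul_lt_mul_of_pos_left (hy s) h')
      _ = ε := by rw [← add_mul, hab, one_mul]
  -- simplexOn is convex
  have hBconv : Convex ℝ (simplexOn B) := by
    intro x hx y hy a b ha hb hab
    refine ⟨(convex_stdSimplex ℝ A) hx.1 hy.1 ha hb hab, fun c hc => ?_⟩
    simp [Pi.add_apply, hx.2 c hc, hy.2 c hc]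
  -- C is convex
  have hCconv : Convex ℝ C := by
    rintro x ⟨α, hα, rfl⟩ y ⟨β, hβ, rfl⟩ a b ha hb hab
    refine ⟨a • α + b • β, hBconv hα hβ ha hb hab, ?_⟩
    funext s
    simp only [hg, pay_smul_add, Pi.add_apply, Pi.smul_apply, smul_eq_mul]
    linear_combination (ubar u v (p s)) * hab
  -- disjoint
  have hdisj : Disjoint O C := by
    rw [Set.disjoint_right]
    rintro x ⟨α, hα, rfl⟩ hxO
    obtain ⟨s, hs⟩ := hyp α hα
    exact absurd (hxO s) (not_lt.mpr hs)
  -- separation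
  obtain ⟨f, c, hfO, hfC⟩ := geometric_hahn_banach_open hOconv hOopen hCconv hdisj
  -- represent f by a vector m
  set e : S → (S → ℝ) := fun s j => if s = j then 1 else 0 with he
  set m : S → ℝ := fun s => f (e s) with hm
  have hrep : ∀ x : S → ℝ, f x = ∑ s, x s * m s := by
    intro x
    conv_lhs => rw [pi_eq_sum_univ x]
    rw [map_sum]
    exact Finset.sum_congr rfl fun s _ => by rw [map_smul, smul_eq_mul]
  -- the point (ε/2, ..., ε/2) is in O
  have hhalf : (fun _ : S => ε / 2) ∈ O := fun s => by simpa using half_lt_self hε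
  -- m is nonneg
  have hmnn : ∀ s, 0 ≤ m s := by
    intro s
    by_contra h
    push_neg at h
    set t : ℝ := (c - f (fun _ => ε / 2) + 1) / (-(m s)) with ht
    have hfc : f (fun _ => ε / 2) < c := hfO _ hhalf
    have htpos : 0 ≤ t := le_div_iff₀ (by linarith) |>.mpr (by linarith)
    have hmem : ((fun _ : S => ε / 2) - t • e s) ∈ O := by
      intro j
      simp only [Pi.sub_apply, Pi.smul_apply, he, smul_eq_mul]
      by_cases hj : s = j
      · simp [hj]; nlinarith
      · simp [hj]; linarith [half_lt_self hε]
    have := hfO _ hmem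
    rw [map_sub, map_smul, smul_eq_mul, show f (e s) = m s from rfl] at this
    have hts : t * m s = -(c - f (fun _ => ε / 2) + 1) := by
      rw [ht]; field_simp
      rw [mul_div_assoc, div_self h.ne, mul_one]
    rw [hts] at this
    linarith
  -- m is not identically zero
  obtain ⟨b, hb⟩ := hB
  set α₀ : A → ℝ := fun a => if a = b then 1 else 0 with hα₀
  have hα₀mem : α₀ ∈ simplexOn B := by
    refine ⟨⟨fun a => by positivity, by simp [hα₀]⟩, fun a ha => ?_⟩
    simp only [hα₀, ite_eq_right_iff]
    intro h; exact absurd (h ▸ hb) ha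
  have hC0 : g α₀ ∈ C := ⟨α₀, hα₀mem, rfl⟩
  have hfpos : f (fun _ : S => ε / 2) < f (g α₀) := lt_of_lt_of_le (hfO _ hhalf) (hfC _ hC0)
  have hsumpos : 0 < ∑ s, m s := by
    rcases (Finset.sum_nonneg fun s _ => hmnn s).lt_or_eq with h | h
    · exact h
    · exfalso
      have hz : ∀ s, m s = 0 := by
        intro s
        have := (Finset.sum_eq_zero_iff_of_nonneg fun s _ => hmnn s).mp h.symm
        exact this s (Finset.mem_univ s)
      have h0 : ∀ x : S → ℝ, f x = 0 := fun x => by simp [hrep, hz]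
      rw [h0, h0] at hfpos; exact lt_irrefl 0 hfpos
  -- c ≥ ε * ∑ m
  have hcge : ε * ∑ s, m s ≤ c := by
    by_contra h
    push_neg at h
    set δ : ℝ := (ε * ∑ s, m s - c) / (2 * ∑ s, m s) with hδ
    have hδpos : 0 < δ := div_pos (by linarith) (by linarith)
    have hmem : (fun _ : S => ε - δ) ∈ O := fun s => by simpa using hδpos
    have := hfO _ hmem
    rw [hrep] at this
    have hval : ∑ s, (ε - δ) * m s = (ε - δ) * ∑ s, m s := by rw [Finset.mul_sum]
    rw [hval] at this
    have hδval : δ * ∑ s, m s = (ε * ∑ s, m s - c) / 2 := by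
      rw [hδ]; field_simp
    nlinarith
  -- conclude
  refine ⟨fun s => m s / ∑ s', m s', ⟨fun s => div_nonneg (hmnn s) hsumpos.le, ?_⟩, ?_⟩
  · rw [← Finset.sum_div, div_self hsumpos.ne']
  · intro α hα
    have hgα : g α ∈ C := ⟨α, hα, rfl⟩
    have h1 : c ≤ ∑ s, g α s * m s := by rw [← hrep]; exact hfC _ hgα
    have h2 : ε * ∑ s, m s ≤ ∑ s, g α s * m s := le_trans hcge h1
    rw [pay_sum]
    have key : ε ≤ ∑ s, (m s / ∑ s', m s') * g α s := by
      have : ∑ s, (m s / ∑ s', m s') * g α s = (∑ s, g α s * m s) / ∑ s', m s' := by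
        rw [Finset.sum_div]
        exact Finset.sum_congr rfl fun s _ => by ring
      rw [this, le_div_iff₀ hsumpos]
      linarith [h2]
    have hexp : ∑ s, (m s / ∑ s', m s') * g α s
        = (∑ s, (m s / ∑ s', m s') * pay u α (p s)) - ∑ s, (m s / ∑ s', m s') * ubar u v (p s) := by
      rw [← Finset.sum_sub_distrib]
      exact Finset.sum_congr rfl fun s _ => by simp [hg]; ring
    rw [hexp] at key
    linarith
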